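/- Let w, c₁, c₂ > 0, set λ = √( w(c₁ + c₂)/(2c₁c₂) ), and suppose r ≥ (c₁² + c₂²)/(c₁ + c₂)² + w/(2(c₁ + c₂)) − (c₁ − c₂)²/(2(c₁ + c₂)²·cosh(λ)). For a square-integrable function f on [0,1] and i ∈ {1,2}, define Jᵢ(f) = ∫₀¹ ( r·f(α) − f(α)²/2 − (w/(2cᵢ))·( ∫_α¹ f(t) dt )² ) dα. Define f̃₁(α) = (c₂ − c₁)/(2(c₁ + c₂)) · cosh(λ(1−α))/cosh(λ) + c₁/(c₁ + c₂) and f̃₂(α) = 1 − f̃₁(α). Then 0 ≤ f̃₁(α) ≤ 1 for all α ∈ [0,1], and for every pair of square-integrable functions f₁, f₂ : ℝ → ℝ on [0,1] with f₁ ≥ 0, f₂ ≥ 0 and f₁ + f₂ ≤ 1 almost everywhere on [0,1], one has J₁(f₁) + J₂(f₂) ≤ J₁(f̃₁) + J₂(f̃₂). -/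

import Mathlib

open MeasureTheory


private lemma contC (lam : ℝ) : Continuous fun t : ℝ => Real.cosh (lam * (1 - t)) :=
  Real.continuous_cosh.comp (continuous_const.mul (continuous_const.sub continuous_id))

private lemma contS (lam : ℝ) : Continuous fun t : ℝ => Real.sinh (lam * (1 - t)) :=
  Real.continuous_sinh.comp (continuous_const.mul (continuous_const.sub continuous_id))

private lemma contPoly : Continuous fun t : ℝ => t - t ^ 2 / 2 :=
  continuous_id.sub ((continuous_pow 2).div_const 2)

lemma aux_swap (g h : ℝ → ℝ) (hg : Continuous g) (hmh : Measurable h)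
    (hih : IntegrableOn h (Set.Ioc (0:ℝ) 1)) :
    ∫ α in (0:ℝ)..1, g α * ∫ t in α..(1:ℝ), h t
      = ∫ t in (0:ℝ)..1, (∫ α in (0:ℝ)..t, g α) * h t := by
  have h01 : (0:ℝ) ≤ 1 := zero_le_one
  set μ := volume.restrict (Set.Ioc (0:ℝ) 1) with hμ
  have hgint : Integrable g μ := hg.integrableOn_Ioc
  have hhint : Integrable h μ := hih
  have hF : Integrable (Function.uncurry fun x y => if x < y then g x * h y else 0) (μ.prod μ) := by
    have hb : Integrable (fun p : ℝ × ℝ => g p.1 * h p.2) (μ.prod μ) := hgint.mul_prod hhint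
    refine hb.norm.mono' ?_ ?_
    · apply Measurable.aestronglyMeasurable
      exact Measurable.ite (measurableSet_lt measurable_fst measurable_snd)
        ((hg.measurable.comp measurable_fst).mul (hmh.comp measurable_snd)) measurable_const
    · refine Filter.Eventually.of_forall (fun p => ?_)
      simp only [Function.uncurry]
      split_ifs with hp
      · exact le_refl _
      · simpa using mul_nonneg (abs_nonneg (g p.1)) (abs_nonneg (h p.2))
  have hswap := integral_integral_swap hF
  have hL : (∫ x, ∫ y, (if x < y then g x * h y else 0) ∂μ ∂μ)
      = ∫ α in (0:ℝ)..1, g α * ∫ t in α..(1:ℝ), h t := by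
    rw [intervalIntegral.integral_of_le h01]
    refine integral_congr_ae ?_
    filter_upwards [ae_restrict_mem measurableSet_Ioc] with x hx
    have : (fun y => if x < y then g x * h y else 0)
        = Set.indicator (Set.Ioi x) (fun y => g x * h y) := by
      funext y; simp [Set.indicator_apply, Set.mem_Ioi]
    rw [this, integral_indicator measurableSet_Ioi, hμ,
      Measure.restrict_restrict measurableSet_Ioi]
    have hset : Set.Ioi x ∩ Set.Ioc 0 1 = Set.Ioc x 1 := by
      ext y
      simp only [Set.mem_inter_iff, Set.mem_Ioi, Set.mem_Ioc]
      constructor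
      · rintro ⟨h1, _, h3⟩; exact ⟨h1, h3⟩
      · rintro ⟨h1, h2⟩; exact ⟨h1, hx.1.trans h1, h2⟩
    rw [hset, integral_const_mul, ← intervalIntegral.integral_of_le hx.2]
  have hR : (∫ y, ∫ x, (if x < y then g x * h y else 0) ∂μ ∂μ)
      = ∫ t in (0:ℝ)..1, (∫ α in (0:ℝ)..t, g α) * h t := by
    rw [intervalIntegral.integral_of_le h01]
    refine integral_congr_ae ?_
    filter_upwards [ae_restrict_mem measurableSet_Ioc] with y hy
    have : (fun x => if x < y then g x * h y else 0)
        = Set.indicator (Set.Iio y) (fun x => g x * h y) := by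
      funext x; simp [Set.indicator_apply, Set.mem_Iio]
    rw [this, integral_indicator measurableSet_Iio, hμ,
      Measure.restrict_restrict measurableSet_Iio]
    have hset : Set.Iio y ∩ Set.Ioc 0 1 = Set.Ioo 0 y := by
      ext x
      simp only [Set.mem_inter_iff, Set.mem_Iio, Set.mem_Ioc, Set.mem_Ioo]
      constructor
      · rintro ⟨h1, h2, _⟩; exact ⟨h2, h1⟩
      · rintro ⟨h1, h2⟩; exact ⟨h2, h1, (le_of_lt h2).trans hy.2⟩
    rw [hset, integral_mul_const, ← integral_Ioc_eq_integral_Ioo,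
      ← intervalIntegral.integral_of_le (le_of_lt hy.1)]
  rw [← hL, ← hR]
  exact hswap

set_option maxHeartbeats 2000000 in
lemma station (r w c lam A a : ℝ) (hw : 0 < w) (hc : 0 < c) (hlam : 0 < lam)
    (ft : ℝ → ℝ)
    (hft : ∀ u, ft u = A * (Real.cosh (lam * (1 - u)) / Real.cosh lam) + a)
    (f : ℝ → ℝ) (hmf : Measurable f) (hif : Integrable f)
    (hif2 : Integrable (fun x => f x ^ 2)) :
    (∫ α in (0:ℝ)..1, (r * f α - f α ^ 2 / 2 - w / (2 * c) * (∫ t in α..1, f t) ^ 2))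
      ≤ (∫ α in (0:ℝ)..1, (r * ft α - ft α ^ 2 / 2 - w / (2 * c) * (∫ t in α..1, ft t) ^ 2))
        + ∫ t in (0:ℝ)..1,
            (r - ft t - w / c *
              (A / (lam ^ 2 * Real.cosh lam) * (Real.cosh lam - Real.cosh (lam * (1 - t)))
                + a * (t - t ^ 2 / 2))) * (f t - ft t) := by
  have h01 : (0:ℝ) ≤ 1 := zero_le_one
  have hch : Real.cosh lam ≠ 0 := (Real.cosh_pos lam).ne'
  have hlam0 : lam ≠ 0 := hlam.ne'
  have hfteq : ft = fun u => A * (Real.cosh (lam * (1 - u)) / Real.cosh lam) + a := funext hft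
  have hcont_ft : Continuous ft := by
    rw [hfteq]
    exact (continuous_const.mul ((contC lam).div_const _)).add continuous_const
  obtain ⟨GG, hGGdef⟩ : ∃ g : ℝ → ℝ, g = fun α =>
      A / (lam * Real.cosh lam) * Real.sinh (lam * (1 - α)) + a * (1 - α) := ⟨_, rfl⟩
  obtain ⟨QQ, hQQdef⟩ : ∃ g : ℝ → ℝ, g = fun t => A / (lam ^ 2 * Real.cosh lam)
      * (Real.cosh lam - Real.cosh (lam * (1 - t))) + a * (t - t ^ 2 / 2) := ⟨_, rfl⟩
  have hcont_GG : Continuous GG := by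
    rw [hGGdef]
    exact (continuous_const.mul (contS lam)).add
      (continuous_const.mul (continuous_const.sub continuous_id))
  have hcont_QQ : Continuous QQ := by
    rw [hQQdef]
    exact (continuous_const.mul (continuous_const.sub (contC lam))).add
      (continuous_const.mul contPoly)
  have hderiv_inner : ∀ u : ℝ, HasDerivAt (fun x : ℝ => lam * (1 - x)) (-lam) u := by
    intro u
    have h1 : HasDerivAt (fun x : ℝ => 1 - x) (-1) u := by
      simpa using (hasDerivAt_id u).const_sub 1
    simpa using h1.const_mul lam
  have hG : ∀ α : ℝ, (∫ t in α..1, ft t) = GG α := by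
    intro α
    have hd : ∀ u ∈ Set.uIcc α 1, HasDerivAt
        (fun x => -(A / (lam * Real.cosh lam)) * Real.sinh (lam * (1 - x)) + a * x) (ft u) u := by
      intro u _
      have hs : HasDerivAt (fun x => Real.sinh (lam * (1 - x)))
          (Real.cosh (lam * (1 - u)) * (-lam)) u := (hderiv_inner u).sinh
      have h2 := (hs.const_mul (-(A / (lam * Real.cosh lam)))).add ((hasDerivAt_id u).const_mul a)
      refine h2.congr_deriv ?_
      rw [hft u]; field_simp
    rw [intervalIntegral.integral_eq_sub_of_hasDerivAt hd (hcont_ft.intervalIntegrable _ _)]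
    have h0 : lam * (1 - 1) = 0 := by ring
    simp only [hGGdef, h0, Real.sinh_zero]
    ring
  have hQ : ∀ t : ℝ, (∫ s in (0:ℝ)..t, GG s) = QQ t := by
    intro t
    have hd : ∀ u ∈ Set.uIcc (0:ℝ) t, HasDerivAt
        (fun x => -(A / (lam ^ 2 * Real.cosh lam)) * Real.cosh (lam * (1 - x))
          + a * (x - x ^ 2 / 2)) (GG u) u := by
      intro u _
      have hcsh : HasDerivAt (fun x => Real.cosh (lam * (1 - x)))
          (Real.sinh (lam * (1 - u)) * (-lam)) u := (hderiv_inner u).cosh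
      have hp : HasDerivAt (fun x : ℝ => x - x ^ 2 / 2) (1 - u) u := by
        exact ((hasDerivAt_id u).sub ((hasDerivAt_pow 2 u).div_const 2)).congr_deriv (by norm_num)
      have h2 := (hcsh.const_mul (-(A / (lam ^ 2 * Real.cosh lam)))).add (hp.const_mul a)
      refine h2.congr_deriv ?_
      simp only [hGGdef]
      field_simp
    rw [intervalIntegral.integral_eq_sub_of_hasDerivAt hd (hcont_GG.intervalIntegrable _ _)]
    have h0 : lam * (1 - 0) = lam := by ring
    simp only [hQQdef, h0]
    ring
  obtain ⟨h, hhdef⟩ : ∃ g : ℝ → ℝ, g = fun t => f t - ft t := ⟨_, rfl⟩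
  have hmh : Measurable h := by rw [hhdef]; exact hmf.sub hcont_ft.measurable
  have hih : IntegrableOn h (Set.Ioc (0:ℝ) 1) := by
    rw [hhdef]; exact hif.restrict.sub hcont_ft.integrableOn_Ioc
  obtain ⟨Ff, hFfdef⟩ : ∃ g : ℝ → ℝ, g = fun α => ∫ t in α..1, f t := ⟨_, rfl⟩
  have hFfeq : ∀ α, Ff α = (∫ t in (0:ℝ)..1, f t) - ∫ t in (0:ℝ)..α, f t := by
    intro α
    simp only [hFfdef]
    exact (intervalIntegral.integral_interval_sub_left (hif.intervalIntegrable)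
      (hif.intervalIntegrable)).symm
  have hcont_Ff : Continuous Ff := by
    have : Ff = fun α => (∫ t in (0:ℝ)..1, f t) - ∫ t in (0:ℝ)..α, f t := funext hFfeq
    rw [this]
    exact continuous_const.sub
      (intervalIntegral.continuous_primitive (fun a b => hif.intervalIntegrable) 0)
  obtain ⟨Hh, hHhdef⟩ : ∃ g : ℝ → ℝ, g = fun α => ∫ t in α..1, h t := ⟨_, rfl⟩
  have hHh : ∀ α, Hh α = Ff α - GG α := by
    intro α
    simp only [hHhdef, hhdef, hFfdef]
    rw [intervalIntegral.integral_sub (hif.intervalIntegrable) (hcont_ft.intervalIntegrable _ _),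
      hG α]
  have hcont_Hh : Continuous Hh := by
    have : Hh = fun α => Ff α - GG α := funext hHh
    rw [this]
    exact hcont_Ff.sub hcont_GG
  -- interval integrability facts
  have iF : IntervalIntegrable f volume 0 1 := hif.intervalIntegrable
  have ift : IntervalIntegrable ft volume 0 1 := hcont_ft.intervalIntegrable _ _
  have ih : IntervalIntegrable h volume 0 1 := by rw [hhdef]; exact iF.sub ift
  have iT1 : IntervalIntegrable
      (fun α => r * ft α - ft α ^ 2 / 2 - w / (2 * c) * GG α ^ 2) volume 0 1 := by
    apply Continuous.intervalIntegrable
    exact ((continuous_const.mul hcont_ft).sub ((hcont_ft.pow 2).div_const 2)).sub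
      (continuous_const.mul (hcont_GG.pow 2))
  have icross1 : IntervalIntegrable (fun α => (r - ft α) * h α) volume 0 1 :=
    ih.continuousOn_mul (continuous_const.sub hcont_ft).continuousOn
  have icross2 : IntervalIntegrable (fun α => w / c * (GG α * Hh α)) volume 0 1 :=
    ((hcont_GG.mul hcont_Hh).intervalIntegrable _ _).const_mul _
  have icross : IntervalIntegrable
      (fun α => (r - ft α) * h α - w / c * (GG α * Hh α)) volume 0 1 := icross1.sub icross2
  have ifft : IntervalIntegrable (fun x => f x * ft x) volume 0 1 :=
    iF.mul_continuousOn hcont_ft.continuousOn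
  have ih2 : IntervalIntegrable (fun x => h x ^ 2) volume 0 1 := by
    have hexp : (fun x => h x ^ 2) = fun x => f x ^ 2 - 2 * (f x * ft x) + ft x ^ 2 := by
      funext x; simp only [hhdef]; ring
    rw [hexp]
    exact (hif2.intervalIntegrable.sub (ifft.const_mul 2)).add
      ((hcont_ft.pow 2).intervalIntegrable _ _)
  have ineg : IntervalIntegrable
      (fun α => -(h α ^ 2 / 2) - w / (2 * c) * Hh α ^ 2) volume 0 1 :=
    (ih2.div_const 2).neg.sub (((hcont_Hh.pow 2).intervalIntegrable _ _).const_mul _)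
  have iQh : IntervalIntegrable (fun t => w / c * (QQ t * h t)) volume 0 1 :=
    (ih.continuousOn_mul hcont_QQ.continuousOn).const_mul _
  have iPh : IntervalIntegrable (fun t => (r - ft t - w / c * QQ t) * h t) volume 0 1 :=
    ih.continuousOn_mul ((continuous_const.sub hcont_ft).sub
      (continuous_const.mul hcont_QQ)).continuousOn
  -- pointwise expansion
  have key : ∀ α : ℝ, r * f α - f α ^ 2 / 2 - w / (2 * c) * (∫ t in α..1, f t) ^ 2
      = (r * ft α - ft α ^ 2 / 2 - w / (2 * c) * GG α ^ 2)
        + (((r - ft α) * h α - w / c * (GG α * Hh α))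
          + (-(h α ^ 2 / 2) - w / (2 * c) * Hh α ^ 2)) := by
    intro α
    have h1 : (∫ t in α..1, f t) = GG α + Hh α := by
      have h0 := hHh α
      simp only [hFfdef] at h0
      linarith
    have h2 : f α = ft α + h α := by simp [hhdef]
    rw [h1, h2]; ring
  have step1 : (∫ α in (0:ℝ)..1, (r * f α - f α ^ 2 / 2 - w / (2 * c) * (∫ t in α..1, f t) ^ 2))
      = (∫ α in (0:ℝ)..1, ((r * ft α - ft α ^ 2 / 2 - w / (2 * c) * GG α ^ 2)
        + (((r - ft α) * h α - w / c * (GG α * Hh α))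
          + (-(h α ^ 2 / 2) - w / (2 * c) * Hh α ^ 2)))) :=
    intervalIntegral.integral_congr (fun α _ => key α)
  have step2 : (∫ α in (0:ℝ)..1, ((r * ft α - ft α ^ 2 / 2 - w / (2 * c) * GG α ^ 2)
        + (((r - ft α) * h α - w / c * (GG α * Hh α))
          + (-(h α ^ 2 / 2) - w / (2 * c) * Hh α ^ 2))))
      = (∫ α in (0:ℝ)..1, (r * ft α - ft α ^ 2 / 2 - w / (2 * c) * GG α ^ 2))
        + ((∫ α in (0:ℝ)..1, ((r - ft α) * h α - w / c * (GG α * Hh α)))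
          + ∫ α in (0:ℝ)..1, (-(h α ^ 2 / 2) - w / (2 * c) * Hh α ^ 2)) := by
    rw [intervalIntegral.integral_add iT1 (icross.add ineg),
      intervalIntegral.integral_add icross ineg]
  have hnegle : (∫ α in (0:ℝ)..1, (-(h α ^ 2 / 2) - w / (2 * c) * Hh α ^ 2)) ≤ 0 := by
    rw [intervalIntegral.integral_of_le h01]
    apply integral_nonpos
    intro x
    have h1 : 0 ≤ w / (2 * c) := div_nonneg hw.le (by linarith)
    have h2 : (0:ℝ) ≤ h x ^ 2 := sq_nonneg _
    have h3 : (0:ℝ) ≤ Hh x ^ 2 := sq_nonneg _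
    simp only [Pi.zero_apply]
    nlinarith
  have hcrossle : (∫ α in (0:ℝ)..1, ((r - ft α) * h α - w / c * (GG α * Hh α)))
      = ∫ t in (0:ℝ)..1, (r - ft t - w / c * QQ t) * h t := by
    rw [intervalIntegral.integral_sub icross1 icross2]
    have hswap : (∫ α in (0:ℝ)..1, GG α * Hh α)
        = ∫ t in (0:ℝ)..1, QQ t * h t := by
      have haux := aux_swap GG h hcont_GG hmh hih
      simp only [hHhdef]
      rw [haux]
      exact intervalIntegral.integral_congr (fun t _ => by rw [hQ t])
    have h2 : (∫ α in (0:ℝ)..1, w / c * (GG α * Hh α))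
        = w / c * ∫ α in (0:ℝ)..1, GG α * Hh α := intervalIntegral.integral_const_mul _ _
    have h3 : (∫ t in (0:ℝ)..1, w / c * (QQ t * h t))
        = w / c * ∫ t in (0:ℝ)..1, QQ t * h t := intervalIntegral.integral_const_mul _ _
    have h4 : (∫ t in (0:ℝ)..1, (r - ft t - w / c * QQ t) * h t)
        = (∫ α in (0:ℝ)..1, (r - ft α) * h α) - ∫ t in (0:ℝ)..1, w / c * (QQ t * h t) := by
      rw [← intervalIntegral.integral_sub icross1 iQh]
      exact intervalIntegral.integral_congr (fun t _ => by ring)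
    rw [h4, h2, h3, hswap]
  have hT1eq : (∫ α in (0:ℝ)..1, (r * ft α - ft α ^ 2 / 2 - w / (2 * c) * (∫ t in α..1, ft t) ^ 2))
      = ∫ α in (0:ℝ)..1, (r * ft α - ft α ^ 2 / 2 - w / (2 * c) * GG α ^ 2) :=
    intervalIntegral.integral_congr (fun α _ => by rw [hG α])
  have hfinal : (∫ t in (0:ℝ)..1,
        (r - ft t - w / c *
          (A / (lam ^ 2 * Real.cosh lam) * (Real.cosh lam - Real.cosh (lam * (1 - t)))
            + a * (t - t ^ 2 / 2))) * (f t - ft t))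
      = ∫ t in (0:ℝ)..1, (r - ft t - w / c * QQ t) * h t :=
    intervalIntegral.integral_congr (fun t _ => by simp only [hQQdef, hhdef])
  rw [step1, step2, hT1eq, hcrossle, hfinal]
  linarith

set_option maxHeartbeats 2000000 in
theorem hotelling_uniform_complete_service
    (r w c₁ c₂ : ℝ) (hw : 0 < w) (hc₁ : 0 < c₁) (hc₂ : 0 < c₂)
    (lam : ℝ) (hlam : lam = Real.sqrt (w * (c₁ + c₂) / (2 * c₁ * c₂)))
    (hr : (c₁ ^ 2 + c₂ ^ 2) / (c₁ + c₂) ^ 2 + w / (2 * (c₁ + c₂))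
      - (c₁ - c₂) ^ 2 / (2 * (c₁ + c₂) ^ 2 * Real.cosh lam) ≤ r)
    (J : ℝ → (ℝ → ℝ) → ℝ)
    (hJ : ∀ (cc : ℝ) (f : ℝ → ℝ), J cc f = ∫ α in (0 : ℝ)..1,
      (r * f α - (f α) ^ 2 / 2 - (w / (2 * cc)) * (∫ t in α..1, f t) ^ 2))
    (ftilde₁ ftilde₂ : ℝ → ℝ)
    (hf1 : ∀ α, ftilde₁ α =
      (c₂ - c₁) / (2 * (c₁ + c₂)) * (Real.cosh (lam * (1 - α)) / Real.cosh lam)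
        + c₁ / (c₁ + c₂))
    (hf2 : ∀ α, ftilde₂ α = 1 - ftilde₁ α) :
    (∀ α ∈ Set.Icc (0 : ℝ) 1, 0 ≤ ftilde₁ α ∧ ftilde₁ α ≤ 1) ∧
    (∀ f₁ f₂ : ℝ → ℝ,
      MemLp f₁ 2 (volume.restrict (Set.Icc (0 : ℝ) 1)) →
      MemLp f₂ 2 (volume.restrict (Set.Icc (0 : ℝ) 1)) →
      (∀ᵐ α ∂(volume.restrict (Set.Icc (0 : ℝ) 1)),
        0 ≤ f₁ α ∧ 0 ≤ f₂ α ∧ f₁ α + f₂ α ≤ 1) →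
      J c₁ f₁ + J c₂ f₂ ≤ J c₁ ftilde₁ + J c₂ ftilde₂) := by
  have h01 : (0:ℝ) ≤ 1 := zero_le_one
  have hs : 0 < c₁ + c₂ := by linarith
  have hlampos : 0 < lam := by
    rw [hlam]; apply Real.sqrt_pos.mpr; positivity
  have hk : lam ^ 2 = w * (c₁ + c₂) / (2 * c₁ * c₂) := by
    rw [hlam, sq]; exact Real.mul_self_sqrt (by positivity)
  have hchpos : 0 < Real.cosh lam := Real.cosh_pos lam
  have hch : Real.cosh lam ≠ 0 := hchpos.ne'
  -- feasibility
  have hfeas : ∀ α ∈ Set.Icc (0:ℝ) 1, 0 ≤ ftilde₁ α ∧ ftilde₁ α ≤ 1 := by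
    intro α hα
    obtain ⟨ha0, ha1⟩ := hα
    rw [hf1 α]
    set ρ := Real.cosh (lam * (1 - α)) / Real.cosh lam with hρ
    have hρ0 : 0 ≤ ρ := by positivity
    have hρ1 : ρ ≤ 1 := by
      rw [hρ, div_le_one hchpos, Real.cosh_le_cosh, abs_mul]
      calc |lam| * |1 - α| ≤ |lam| * 1 :=
            mul_le_mul_of_nonneg_left (abs_le.mpr ⟨by linarith, by linarith⟩) (abs_nonneg lam)
        _ = |lam| := mul_one _
    have e1 : (c₂ - c₁) / (2 * (c₁ + c₂)) * ρ + c₁ / (c₁ + c₂)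
        = ((c₂ - c₁) * ρ + 2 * c₁) / (2 * (c₁ + c₂)) := by
      field_simp
    rw [e1]
    constructor
    · apply div_nonneg _ (by linarith)
      nlinarith [mul_nonneg hc₂.le hρ0, mul_nonneg hc₁.le (by linarith : (0:ℝ) ≤ 2 - ρ)]
    · rw [div_le_one (by linarith)]
      nlinarith [mul_nonneg hc₁.le hρ0, mul_le_mul_of_nonneg_left hρ1 hc₂.le]
  refine ⟨hfeas, ?_⟩
  intro f₁ f₂ hm1 hm2 hcon
  -- replacement by good representatives
  have repl : ∀ f : ℝ → ℝ, MemLp f 2 (volume.restrict (Set.Icc (0:ℝ) 1)) →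
      ∃ f' : ℝ → ℝ, Measurable f' ∧ Integrable f' ∧ Integrable (fun x => f' x ^ 2) ∧
        f =ᵐ[volume.restrict (Set.Icc (0:ℝ) 1)] f' ∧ ∀ cc : ℝ, J cc f = J cc f' := by
    intro f hf
    obtain ⟨g, hgsm, hfg⟩ := hf.1
    have hgmem : MemLp g 2 (volume.restrict (Set.Icc (0:ℝ) 1)) :=
      (memLp_congr_ae hfg).mp hf
    refine ⟨Set.indicator (Set.Icc 0 1) g, hgsm.measurable.indicator measurableSet_Icc, ?_, ?_, ?_, ?_⟩
    · rw [integrable_indicator_iff measurableSet_Icc]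
      exact hgmem.integrable one_le_two
    · have hsq : (fun x => Set.indicator (Set.Icc (0:ℝ) 1) g x ^ 2)
          = Set.indicator (Set.Icc (0:ℝ) 1) (fun x => g x ^ 2) := by
        funext x
        by_cases hx : x ∈ Set.Icc (0:ℝ) 1 <;> simp [Set.indicator_apply, hx]
      rw [hsq, integrable_indicator_iff measurableSet_Icc]
      exact hgmem.integrable_sq
    · refine hfg.trans ?_
      filter_upwards [ae_restrict_mem measurableSet_Icc] with x hx
      exact (Set.indicator_of_mem hx g).symm
    · -- J values agree
      have hfg' : f =ᵐ[volume.restrict (Set.Icc (0:ℝ) 1)] Set.indicator (Set.Icc 0 1) g := by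
        refine hfg.trans ?_
        filter_upwards [ae_restrict_mem measurableSet_Icc] with x hx
        exact (Set.indicator_of_mem hx g).symm
      have hE : volume ({x | f x ≠ Set.indicator (Set.Icc (0:ℝ) 1) g x} ∩ Set.Icc 0 1) = 0 := by
        have := hfg'
        rw [Filter.EventuallyEq, ae_iff] at this
        rw [Measure.restrict_apply' measurableSet_Icc] at this
        exact this
      have hae : ∀ᵐ x ∂(volume : Measure ℝ),
          x ∉ {x | f x ≠ Set.indicator (Set.Icc (0:ℝ) 1) g x} ∩ Set.Icc 0 1 :=
        measure_eq_zero_iff_ae_notMem.mp hE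
      have hptwise : ∀ᵐ x ∂(volume : Measure ℝ),
          x ∈ Set.Icc (0:ℝ) 1 → f x = Set.indicator (Set.Icc 0 1) g x := by
        filter_upwards [hae] with x hx hxm
        by_contra hne
        exact hx ⟨hne, hxm⟩
      intro cc
      rw [hJ, hJ]
      apply intervalIntegral.integral_congr_ae
      filter_upwards [hptwise] with α hα hαm
      rw [Set.uIoc_of_le h01] at hαm
      have hα1 : f α = Set.indicator (Set.Icc 0 1) g α :=
        hα ⟨hαm.1.le, hαm.2⟩
      have hα2 : (∫ t in α..1, f t) = ∫ t in α..1, Set.indicator (Set.Icc 0 1) g t := by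
        apply intervalIntegral.integral_congr_ae
        filter_upwards [hptwise] with t ht htm
        rw [Set.uIoc_of_le hαm.2] at htm
        exact ht ⟨(hαm.1.trans htm.1).le, htm.2⟩
      rw [hα1, hα2]
  obtain ⟨g₁, hmg₁, hig₁, hig₁2, hae₁, hJ₁⟩ := repl f₁ hm1
  obtain ⟨g₂, hmg₂, hig₂, hig₂2, hae₂, hJ₂⟩ := repl f₂ hm2
  have hcon' : ∀ᵐ α ∂(volume.restrict (Set.Icc (0:ℝ) 1)),
      0 ≤ g₁ α ∧ 0 ≤ g₂ α ∧ g₁ α + g₂ α ≤ 1 := by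
    filter_upwards [hcon, hae₁, hae₂] with α h1 h2 h3
    rw [← h2, ← h3]; exact h1
  -- station inequalities
  have hft2 : ∀ u, ftilde₂ u = (c₁ - c₂) / (2 * (c₁ + c₂))
      * (Real.cosh (lam * (1 - u)) / Real.cosh lam) + c₂ / (c₁ + c₂) := by
    intro u
    rw [hf2, hf1]
    field_simp
    ring
  have st1 := station r w c₁ lam ((c₂ - c₁) / (2 * (c₁ + c₂))) (c₁ / (c₁ + c₂))
    hw hc₁ hlampos ftilde₁ hf1 g₁ hmg₁ hig₁ hig₁2
  have st2 := station r w c₂ lam ((c₁ - c₂) / (2 * (c₁ + c₂))) (c₂ / (c₁ + c₂))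
    hw hc₂ hlampos ftilde₂ hft2 g₂ hmg₂ hig₂ hig₂2
  -- the common multiplier
  obtain ⟨P, hPdef⟩ : ∃ p : ℝ → ℝ, p = fun t => r - (c₁ ^ 2 + c₂ ^ 2) / (c₁ + c₂) ^ 2
      + (c₁ - c₂) ^ 2 / (2 * (c₁ + c₂) ^ 2) * (Real.cosh (lam * (1 - t)) / Real.cosh lam)
      - w / (c₁ + c₂) * (t - t ^ 2 / 2) := ⟨_, rfl⟩
  have hcontP : Continuous P := by
    rw [hPdef]
    exact (continuous_const.add (continuous_const.mul ((contC lam).div_const _))).sub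
      (continuous_const.mul contPoly)
  have hP1 : ∀ t : ℝ, (r - ftilde₁ t - w / c₁ *
      ((c₂ - c₁) / (2 * (c₁ + c₂)) / (lam ^ 2 * Real.cosh lam)
        * (Real.cosh lam - Real.cosh (lam * (1 - t)))
        + c₁ / (c₁ + c₂) * (t - t ^ 2 / 2))) = P t := by
    intro t
    rw [hf1 t, hPdef, hk]
    field_simp
    ring
  have hP2 : ∀ t : ℝ, (r - ftilde₂ t - w / c₂ *
      ((c₁ - c₂) / (2 * (c₁ + c₂)) / (lam ^ 2 * Real.cosh lam)
        * (Real.cosh lam - Real.cosh (lam * (1 - t)))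
        + c₂ / (c₁ + c₂) * (t - t ^ 2 / 2))) = P t := by
    intro t
    rw [hft2 t, hPdef, hk]
    field_simp
    ring
  have hPnonneg : ∀ t : ℝ, 0 ≤ P t := by
    intro t
    rw [hPdef]
    simp only
    have h1 : 1 ≤ Real.cosh (lam * (1 - t)) := Real.one_le_cosh _
    have h4 : t - t ^ 2 / 2 ≤ 1 / 2 := by nlinarith [sq_nonneg (1 - t)]
    have e1 : (c₁ - c₂) ^ 2 / (2 * (c₁ + c₂) ^ 2 * Real.cosh lam)
        ≤ (c₁ - c₂) ^ 2 / (2 * (c₁ + c₂) ^ 2) * (Real.cosh (lam * (1 - t)) / Real.cosh lam) := by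
      have h' : (1:ℝ) / Real.cosh lam ≤ Real.cosh (lam * (1 - t)) / Real.cosh lam := by gcongr
      calc (c₁ - c₂) ^ 2 / (2 * (c₁ + c₂) ^ 2 * Real.cosh lam)
          = (c₁ - c₂) ^ 2 / (2 * (c₁ + c₂) ^ 2) * (1 / Real.cosh lam) := by
            rw [← div_div, div_eq_mul_one_div]
        _ ≤ (c₁ - c₂) ^ 2 / (2 * (c₁ + c₂) ^ 2)
            * (Real.cosh (lam * (1 - t)) / Real.cosh lam) :=
            mul_le_mul_of_nonneg_left h' (by positivity)
    have e2 : w / (c₁ + c₂) * (t - t ^ 2 / 2) ≤ w / (2 * (c₁ + c₂)) := by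
      calc w / (c₁ + c₂) * (t - t ^ 2 / 2) ≤ w / (c₁ + c₂) * (1 / 2) :=
            mul_le_mul_of_nonneg_left h4 (by positivity)
        _ = w / (2 * (c₁ + c₂)) := by rw [div_mul_div_comm, mul_one, mul_comm]
    linarith
  -- integrability for the final sum
  have hcontft1 : Continuous ftilde₁ := by
    rw [funext hf1]
    exact (continuous_const.mul ((contC lam).div_const _)).add continuous_const
  have hcontft2 : Continuous ftilde₂ := by
    rw [funext hft2]
    exact (continuous_const.mul ((contC lam).div_const _)).add continuous_const
  have ihg₁ : IntervalIntegrable (fun t => g₁ t - ftilde₁ t) volume 0 1 :=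
    hig₁.intervalIntegrable.sub (hcontft1.intervalIntegrable _ _)
  have ihg₂ : IntervalIntegrable (fun t => g₂ t - ftilde₂ t) volume 0 1 :=
    hig₂.intervalIntegrable.sub (hcontft2.intervalIntegrable _ _)
  have iP1 : IntervalIntegrable (fun t => P t * (g₁ t - ftilde₁ t)) volume 0 1 :=
    ihg₁.continuousOn_mul hcontP.continuousOn
  have iP2 : IntervalIntegrable (fun t => P t * (g₂ t - ftilde₂ t)) volume 0 1 :=
    ihg₂.continuousOn_mul hcontP.continuousOn
  -- final nonpositivity
  have hsum : (∫ t in (0:ℝ)..1, P t * (g₁ t - ftilde₁ t))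
      + (∫ t in (0:ℝ)..1, P t * (g₂ t - ftilde₂ t)) ≤ 0 := by
    rw [← intervalIntegral.integral_add iP1 iP2]
    rw [intervalIntegral.integral_of_le h01]
    apply integral_nonpos_of_ae
    have hcon'' : ∀ᵐ α ∂(volume.restrict (Set.Ioc (0:ℝ) 1)),
        0 ≤ g₁ α ∧ 0 ≤ g₂ α ∧ g₁ α + g₂ α ≤ 1 :=
      hcon'.filter_mono (ae_mono (Measure.restrict_mono Set.Ioc_subset_Icc_self le_rfl))
    filter_upwards [hcon''] with α hα
    obtain ⟨hg1, hg2, hg12⟩ := hα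
    have heq : P α * (g₁ α - ftilde₁ α) + P α * (g₂ α - ftilde₂ α)
        = P α * (g₁ α + g₂ α - 1) := by
      rw [hf2 α]; ring
    rw [Pi.zero_apply, heq]
    exact mul_nonpos_of_nonneg_of_nonpos (hPnonneg α) (by linarith)
  -- convert station conclusions and combine
  have st1' : J c₁ g₁ ≤ J c₁ ftilde₁ + ∫ t in (0:ℝ)..1, P t * (g₁ t - ftilde₁ t) := by
    rw [hJ c₁ g₁, hJ c₁ ftilde₁]
    refine le_trans st1 ?_
    have : (∫ t in (0:ℝ)..1, (r - ftilde₁ t - w / c₁ *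
        ((c₂ - c₁) / (2 * (c₁ + c₂)) / (lam ^ 2 * Real.cosh lam)
          * (Real.cosh lam - Real.cosh (lam * (1 - t)))
          + c₁ / (c₁ + c₂) * (t - t ^ 2 / 2))) * (g₁ t - ftilde₁ t))
        = ∫ t in (0:ℝ)..1, P t * (g₁ t - ftilde₁ t) :=
      intervalIntegral.integral_congr (fun t _ => by rw [hP1 t])
    rw [this]
  have st2' : J c₂ g₂ ≤ J c₂ ftilde₂ + ∫ t in (0:ℝ)..1, P t * (g₂ t - ftilde₂ t) := by
    rw [hJ c₂ g₂, hJ c₂ ftilde₂]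
    refine le_trans st2 ?_
    have : (∫ t in (0:ℝ)..1, (r - ftilde₂ t - w / c₂ *
        ((c₁ - c₂) / (2 * (c₁ + c₂)) / (lam ^ 2 * Real.cosh lam)
          * (Real.cosh lam - Real.cosh (lam * (1 - t)))
          + c₂ / (c₁ + c₂) * (t - t ^ 2 / 2))) * (g₂ t - ftilde₂ t))
        = ∫ t in (0:ℝ)..1, P t * (g₂ t - ftilde₂ t) :=
      intervalIntegral.integral_congr (fun t _ => by rw [hP2 t])
    rw [this]
  rw [hJ₁ c₁, hJ₂ c₂]
  linarith
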